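/- Let f : ℤ → ℂ with f(0) = 1 and suppose f(i)·(f(i+j) - f(j) - f(i+k) + f(k)) = 0 for all i,j,k ∈ ℤ. If f(1) ≠ 0, then setting a = f(1) - 1, one has f(k) = 1 + k·a for all k ∈ ℤ. -/

import Mathlib

/-- If `f : ℤ → ℂ` with `f 0 = 1` satisfies the simplified pre-Lie relation and
`f 1 ≠ 0`, then `f k = 1 + k a` where `a = f 1 - 1`. -/
theorem case_A_d_eq_one (f : ℤ → ℂ) (h0 : f 0 = 1)
    (heq : ∀ i j k : ℤ, f i * (f (i + j) - f j - f (i + k) + f k) = 0)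
    (h1 : f 1 ≠ 0) :
    ∀ k : ℤ, f k = 1 + k * (f 1 - 1) := by
  have step : ∀ j : ℤ, f (1 + j) = f j + (f 1 - 1) := by
    intro j
    have h := heq 1 j 0
    rw [mul_eq_zero] at h
    rcases h with h | h
    · exact absurd h h1
    · rw [add_zero, h0] at h
      linear_combination h
  intro k
  induction k using Int.induction_on with
  | zero => simp [h0]
  | succ n ih =>
    have := step n
    rw [add_comm (1:ℤ) n] at this
    rw [this, ih]; push_cast; ring
  | pred n ih =>
    have h := step (-n - 1)
    have h2 : (1 : ℤ) + (-n - 1) = -n := by ring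
    rw [h2, ih] at h
    push_cast at h ⊢
    linear_combination -h
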